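/- There exists a constant C₁ > 0, depending only on the single-stage costs and the MDP data, such that for every m ≥ 0, the conditional second moment of the Q-learning noise satisfies E[‖M^{m+1}‖² | F_m] ≤ C₁(1 + ‖Q^m‖²) almost surely, where ‖·‖ is the sup norm over all components (n,i,a) and F_m is the σ-algebra generated by the samples {η_{n'}^{l}(i',a') : l < m, n' < N, i' ∈ S, a' ∈ A}. -/

import Mathlib

open Finset MeasureTheory ProbabilityTheory Filter

noncomputable section

/-- The finite-horizon Q-learning iterates `Q^m_n(i,a)(ω)`.
`Qiter N g gN step η Q0 m n i a ω = Q^m_n(i,a)(ω)`, defined by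
`Q^0 = Q0` and, for `n < N`,
`Q^{m+1}_n(i,a) = Q^m_n(i,a) + a(m)(g_n(i,a,η_n^m(i,a)) + min_b Q^m_{n+1}(η_n^m(i,a),b) − Q^m_n(i,a))`,
with `Q^{m+1}_N(i,a) = g_N(i)`. -/
def Qiter {S A Ω : Type*} [Fintype A] [Nonempty A] (N : ℕ)
    (g : ℕ → S → A → S → ℝ) (gN : S → ℝ) (step : ℕ → ℝ)
    (η : ℕ → Fin N → S → A → Ω → S) (Q0 : ℕ → S → A → ℝ) :
    ℕ → ℕ → S → A → Ω → ℝ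
  | 0, n, i, a, _ => Q0 n i a
  | m + 1, n, i, a, ω =>
      if h : n < N then
        Qiter N g gN step η Q0 m n i a ω +
          step m * (g n i a (η m ⟨n, h⟩ i a ω) +
            (⨅ b : A, Qiter N g gN step η Q0 m (n + 1) (η m ⟨n, h⟩ i a ω) b ω) -
            Qiter N g gN step η Q0 m n i a ω)
      else gN i

/-- The Q-learning noise `M^{m+1}_n(i,a)(ω)` (with `Mnoise … m` denoting `M^{m+1}`):
for `n < N` it equals
`g_n(i,a,η_n^m(i,a)) + min_b Q^m_{n+1}(η_n^m(i,a),b)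
  − Σ_j p_n(i,a,j)(g_n(i,a,j) + min_b Q^m_{n+1}(j,b))`,
and it vanishes for `n = N`. -/
def Mnoise {S A Ω : Type*} [Fintype S] [Fintype A] [Nonempty A] (N : ℕ)
    (p g : ℕ → S → A → S → ℝ) (gN : S → ℝ) (step : ℕ → ℝ)
    (η : ℕ → Fin N → S → A → Ω → S) (Q0 : ℕ → S → A → ℝ)
    (m n : ℕ) (i : S) (a : A) (ω : Ω) : ℝ :=
  if h : n < N then
    g n i a (η m ⟨n, h⟩ i a ω) +
      (⨅ b : A, Qiter N g gN step η Q0 m (n + 1) (η m ⟨n, h⟩ i a ω) b ω) -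
      ∑ j, p n i a j * (g n i a j + ⨅ b : A, Qiter N g gN step η Q0 m (n + 1) j b ω)
  else 0

/-- The σ-algebra `F_m` generated by the samples `η_{n'}^l(i',a')` for `l < m`. -/
def filt {S A Ω : Type*} [MeasurableSpace S] (N : ℕ)
    (η : ℕ → Fin N → S → A → Ω → S) (m : ℕ) : MeasurableSpace Ω :=
  ⨆ (l : ℕ) (_ : l < m) (n : Fin N) (i : S) (a : A),
    MeasurableSpace.comap (η l n i a) inferInstance


section Aux

variable {S A Ω : Type*} [Fintype S] [Nonempty S] [Fintype A] [Nonempty A]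
  [MeasurableSpace S] [MeasurableSingletonClass S] [MeasurableSpace Ω]
  (N : ℕ) (g : ℕ → S → A → S → ℝ) (gN : S → ℝ) (step : ℕ → ℝ)
  (η : ℕ → Fin N → S → A → Ω → S) (Q0 : ℕ → S → A → ℝ)

lemma filt_mono {m m' : ℕ} (h : m ≤ m') : filt N η m ≤ filt N η m' := by
  refine iSup_le fun l => iSup_le fun hl => ?_
  exact le_iSup_of_le l (le_iSup_of_le (lt_of_lt_of_le hl h) le_rfl)

lemma filt_le (hmeas : ∀ m n i a, Measurable (η m n i a)) (m : ℕ) :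
    filt N η m ≤ ‹MeasurableSpace Ω› := by
  refine iSup_le fun l => iSup_le fun _ => iSup_le fun n => iSup_le fun i =>
    iSup_le fun a => ?_
  exact (hmeas l n i a).comap_le

lemma eta_meas_filt {l m : ℕ} (hl : l < m) (n : Fin N) (i : S) (a : A) :
    Measurable[filt N η m] (η l n i a) :=
  measurable_iff_comap_le.mpr (le_iSup_of_le l (le_iSup_of_le hl (le_iSup_of_le n
    (le_iSup_of_le i (le_iSup_of_le a le_rfl)))))

lemma measQ : ∀ m n i a, Measurable[filt N η m] (Qiter N g gN step η Q0 m n i a) := by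
  classical
  intro m
  induction m with
  | zero => intro n i a; simp only [Qiter]; exact measurable_const
  | succ m IH =>
    intro n i a
    by_cases h : n < N
    · have hη : Measurable[filt N η (m + 1)] (η m ⟨n, h⟩ i a) :=
        eta_meas_filt N η (Nat.lt_succ_self m) ⟨n, h⟩ i a
      have hQ : ∀ n' i' a', Measurable[filt N η (m + 1)]
          (Qiter N g gN step η Q0 m n' i' a') := fun n' i' a' =>
        (IH n' i' a').mono (filt_mono N η (Nat.le_succ m)) le_rfl
      have hg : Measurable[filt N η (m + 1)]
          (fun ω => g n i a (η m ⟨n, h⟩ i a ω)) :=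
        (measurable_of_countable (g n i a)).comp hη
      have hinf : Measurable[filt N η (m + 1)]
          (fun ω => ⨅ b : A, Qiter N g gN step η Q0 m (n + 1) (η m ⟨n, h⟩ i a ω) b ω) := by
        have heq : (fun ω => ⨅ b : A, Qiter N g gN step η Q0 m (n + 1) (η m ⟨n, h⟩ i a ω) b ω)
            = fun ω => ∑ j : S, if η m ⟨n, h⟩ i a ω = j then
                (⨅ b : A, Qiter N g gN step η Q0 m (n + 1) j b ω) else 0 := by
          funext ω
          rw [Finset.sum_ite_eq]
          simp
        rw [heq]
        refine Finset.measurable_sum _ fun j _ => Measurable.ite ?_ ?_ measurable_const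
        · exact hη (measurableSet_singleton j)
        · exact Measurable.iInf fun b => hQ (n + 1) j b
      have : (Qiter N g gN step η Q0 (m + 1) n i a) = fun ω =>
          Qiter N g gN step η Q0 m n i a ω +
            step m * (g n i a (η m ⟨n, h⟩ i a ω) +
              (⨅ b : A, Qiter N g gN step η Q0 m (n + 1) (η m ⟨n, h⟩ i a ω) b ω) -
              Qiter N g gN step η Q0 m n i a ω) := by
        funext ω; simp only [Qiter, dif_pos h]
      rw [this]
      exact (hQ n i a).add (measurable_const.mul ((hg.add hinf).sub (hQ n i a)))
    · have : (Qiter N g gN step η Q0 (m + 1) n i a) = fun _ => gN i := by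
        funext ω; simp only [Qiter, dif_neg h]
      rw [this]
      exact measurable_const

lemma boundQ (hstep : ∀ m, 0 < step m) :
    ∀ m, ∃ B : ℝ, 0 ≤ B ∧ ∀ n ≤ N, ∀ i a ω, |Qiter N g gN step η Q0 m n i a ω| ≤ B := by
  classical
  intro m
  induction m with
  | zero =>
    obtain ⟨B, hB⟩ := Set.Finite.bddAbove
      (Set.finite_range fun x : Fin (N + 1) × S × A => |Q0 (x.1 : ℕ) x.2.1 x.2.2|)
    refine ⟨max B 0, le_max_right _ _, fun n hn i a ω => ?_⟩
    simp only [Qiter]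
    refine le_trans ?_ (le_max_left _ _)
    have := hB (Set.mem_range_self (⟨⟨n, by omega⟩, i, a⟩ : Fin (N + 1) × S × A))
    simpa using this
  | succ m IH =>
    obtain ⟨B, hB0, hB⟩ := IH
    obtain ⟨Gg0, hGg⟩ := Set.Finite.bddAbove
      (Set.finite_range fun x : Fin N × S × A × S =>
        |g (x.1 : ℕ) x.2.1 x.2.2.1 x.2.2.2|)
    set Gg := max Gg0 0 with hGgdef
    obtain ⟨GN, hGN⟩ := Set.Finite.bddAbove (Set.finite_range fun i : S => |gN i|)
    have hGg0 : 0 ≤ Gg := le_max_right _ _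
    have hGN0 : 0 ≤ GN :=
      le_trans (abs_nonneg _) (hGN (Set.mem_range_self (Classical.arbitrary S)))
    refine ⟨B + step m * (Gg + 2 * B) + GN, by nlinarith [(hstep m).le, hB0, hGg0, hGN0], fun n hn i a ω => ?_⟩
    by_cases h : n < N
    · have hQn : |Qiter N g gN step η Q0 m n i a ω| ≤ B := hB n (le_of_lt h) i a ω
      have hginst : |g n i a (η m ⟨n, h⟩ i a ω)| ≤ Gg := by
        have := hGg (Set.mem_range_self ((⟨n, h⟩, i, a, η m ⟨n, h⟩ i a ω) : Fin N × S × A × S))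
        simp only at this
        exact le_trans this (le_max_left _ _)
      have hinf : |⨅ b : A, Qiter N g gN step η Q0 m (n + 1) (η m ⟨n, h⟩ i a ω) b ω| ≤ B := by
        rw [abs_le]
        constructor
        · refine le_ciInf fun b => ?_
          have := hB (n + 1) (by omega) (η m ⟨n, h⟩ i a ω) b ω
          linarith [(abs_le.1 this).1]
        · refine le_trans (ciInf_le (Set.Finite.bddBelow (Set.finite_range _))
            (Classical.arbitrary A)) ?_
          have := hB (n + 1) (by omega) (η m ⟨n, h⟩ i a ω) (Classical.arbitrary A) ω
          exact (abs_le.1 this).2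
      have : Qiter N g gN step η Q0 (m + 1) n i a ω =
          Qiter N g gN step η Q0 m n i a ω +
            step m * (g n i a (η m ⟨n, h⟩ i a ω) +
              (⨅ b : A, Qiter N g gN step η Q0 m (n + 1) (η m ⟨n, h⟩ i a ω) b ω) -
              Qiter N g gN step η Q0 m n i a ω) := by
        simp only [Qiter, dif_pos h]
      rw [this]
      have hs := (hstep m).le
      calc |Qiter N g gN step η Q0 m n i a ω +
            step m * (g n i a (η m ⟨n, h⟩ i a ω) +
              (⨅ b : A, Qiter N g gN step η Q0 m (n + 1) (η m ⟨n, h⟩ i a ω) b ω) -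
              Qiter N g gN step η Q0 m n i a ω)|
          ≤ |Qiter N g gN step η Q0 m n i a ω| + step m * (|g n i a (η m ⟨n, h⟩ i a ω)| +
              |⨅ b : A, Qiter N g gN step η Q0 m (n + 1) (η m ⟨n, h⟩ i a ω) b ω| +
              |Qiter N g gN step η Q0 m n i a ω|) := by
            refine le_trans (abs_add_le _ _) ?_
            rw [abs_mul, abs_of_pos (hstep m)]
            gcongr
            refine le_trans (abs_sub _ _) ?_
            gcongr
            exact abs_add_le _ _
        _ ≤ B + step m * (Gg + 2 * B) + GN := by
            have h1 : |g n i a (η m ⟨n, h⟩ i a ω)| +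
              |⨅ b : A, Qiter N g gN step η Q0 m (n + 1) (η m ⟨n, h⟩ i a ω) b ω| +
              |Qiter N g gN step η Q0 m n i a ω| ≤ Gg + 2 * B := by linarith
            nlinarith
    · have : Qiter N g gN step η Q0 (m + 1) n i a ω = gN i := by
        simp only [Qiter, dif_neg h]
      rw [this]
      have := hGN (Set.mem_range_self i)
      have hs := (hstep m).le
      nlinarith

end Aux

set_option maxHeartbeats 1000000 in
theorem noise_conditional_second_moment_bound
    {S A Ω : Type*} [Fintype S] [Nonempty S] [MeasurableSpace S]
    [MeasurableSingletonClass S] [Fintype A] [Nonempty A] [MeasurableSpace Ω]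
    (N : ℕ) (hN : 1 ≤ N)
    (p g : ℕ → S → A → S → ℝ) (gN : S → ℝ)
    (hp0 : ∀ n < N, ∀ i a j, 0 ≤ p n i a j)
    (hp1 : ∀ n < N, ∀ i a, ∑ j, p n i a j = 1)
    (P : Measure Ω) [IsProbabilityMeasure P]
    (η : ℕ → Fin N → S → A → Ω → S)
    (hmeas : ∀ m n i a, Measurable (η m n i a))
    (hdist : ∀ (m : ℕ) (n : Fin N) (i : S) (a : A) (j : S),
      P {ω | η m n i a ω = j} = ENNReal.ofReal (p n i a j))
    (hindep : iIndepFun (β := fun _ : ℕ × Fin N × S × A => S)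
      (fun x => η x.1 x.2.1 x.2.2.1 x.2.2.2) P)
    (step : ℕ → ℝ) (hstep : ∀ m, 0 < step m)
    (Q0 : ℕ → S → A → ℝ) (hQ0N : ∀ i a, Q0 N i a = gN i) :
    ∃ C₁ : ℝ, 0 < C₁ ∧ ∀ m : ℕ, ∀ᵐ ω ∂P,
      MeasureTheory.condExp (filt N η m) P
          (fun ω' => (⨆ x : Fin (N + 1) × S × A,
            |Mnoise N p g gN step η Q0 m (x.1 : ℕ) x.2.1 x.2.2 ω'|) ^ 2) ω
        ≤ C₁ * (1 + (⨆ x : Fin (N + 1) × S × A,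
            |Qiter N g gN step η Q0 m (x.1 : ℕ) x.2.1 x.2.2 ω|) ^ 2) := by
  classical
  have hNE : Nonempty (Fin N) := ⟨⟨0, hN⟩⟩
  obtain ⟨G0, hG0⟩ := Set.Finite.bddAbove
    (Set.finite_range fun x : Fin N × S × A × S => |g (x.1 : ℕ) x.2.1 x.2.2.1 x.2.2.2|)
  set G := max G0 0 with hGdef
  have hG : 0 ≤ G := le_max_right _ _
  have hgle : ∀ (n : ℕ), n < N → ∀ (i : S) (a : A) (j : S), |g n i a j| ≤ G := by
    intro n h i a j
    have := hG0 (Set.mem_range_self ((⟨n, h⟩, i, a, j) : Fin N × S × A × S))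
    simp only at this
    exact le_trans this (le_max_left _ _)
  refine ⟨8 * G ^ 2 + 8, by positivity, fun m => ?_⟩
  have hle : filt N η m ≤ ‹MeasurableSpace Ω› := filt_le N η hmeas m
  haveI : SigmaFinite (P.trim hle) := inferInstance
  obtain ⟨B, hB0, hB⟩ := boundQ N g gN step η Q0 hstep m
  set QN : Ω → ℝ := fun ω => ⨆ x : Fin (N + 1) × S × A,
    |Qiter N g gN step η Q0 m (x.1 : ℕ) x.2.1 x.2.2 ω| with hQNdef
  have hQN0 : ∀ ω, 0 ≤ QN ω := by
    intro ω
    simp only [hQNdef]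
    exact le_trans (abs_nonneg _) (le_ciSup (f := fun x : Fin (N + 1) × S × A =>
      |Qiter N g gN step η Q0 m (x.1 : ℕ) x.2.1 x.2.2 ω|)
      (Set.Finite.bddAbove (Set.finite_range _))
      (⟨0, Classical.arbitrary S, Classical.arbitrary A⟩ : Fin (N + 1) × S × A))
  have hQcomp : ∀ (n : ℕ), n ≤ N → ∀ (i : S) (a : A) (ω : Ω),
      |Qiter N g gN step η Q0 m n i a ω| ≤ QN ω := by
    intro n hn i a ω
    simp only [hQNdef]
    have := le_ciSup (f := fun x : Fin (N + 1) × S × A =>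
      |Qiter N g gN step η Q0 m (x.1 : ℕ) x.2.1 x.2.2 ω|)
      (Set.Finite.bddAbove (Set.finite_range _))
      (⟨⟨n, by omega⟩, i, a⟩ : Fin (N + 1) × S × A)
    simpa using this
  have hQNB : ∀ ω, QN ω ≤ B := fun ω =>
    ciSup_le fun x => hB (x.1 : ℕ) (Fin.is_le x.1) x.2.1 x.2.2 ω
  have hinfle : ∀ (n' : ℕ), n' ≤ N → ∀ (j : S) (ω : Ω),
      |⨅ b : A, Qiter N g gN step η Q0 m n' j b ω| ≤ QN ω := by
    intro n' hn' j ω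
    rw [abs_le]
    constructor
    · refine le_ciInf fun b => ?_
      linarith [(abs_le.1 (hQcomp n' hn' j b ω)).1]
    · refine le_trans (ciInf_le (Set.Finite.bddBelow (Set.finite_range _))
        (Classical.arbitrary A)) ?_
      exact (abs_le.1 (hQcomp n' hn' j (Classical.arbitrary A) ω)).2
  have hMle : ∀ (n : ℕ) (i : S) (a : A) (ω : Ω),
      |Mnoise N p g gN step η Q0 m n i a ω| ≤ 2 * G + 2 * QN ω := by
    intro n i a ω
    by_cases h : n < N
    · have hM : Mnoise N p g gN step η Q0 m n i a ω =
        g n i a (η m ⟨n, h⟩ i a ω) +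
          (⨅ b : A, Qiter N g gN step η Q0 m (n + 1) (η m ⟨n, h⟩ i a ω) b ω) -
          ∑ j, p n i a j * (g n i a j +
            ⨅ b : A, Qiter N g gN step η Q0 m (n + 1) j b ω) := by
        simp only [Mnoise, dif_pos h]
      rw [hM]
      have hsum : |∑ j, p n i a j * (g n i a j +
          ⨅ b : A, Qiter N g gN step η Q0 m (n + 1) j b ω)| ≤ G + QN ω := by
        refine le_trans (Finset.abs_sum_le_sum_abs _ _) ?_
        have hterm : ∀ j ∈ Finset.univ, |p n i a j * (g n i a j +
            ⨅ b : A, Qiter N g gN step η Q0 m (n + 1) j b ω)|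
              ≤ p n i a j * (G + QN ω) := by
          intro j _
          rw [abs_mul, abs_of_nonneg (hp0 n h i a j)]
          refine mul_le_mul_of_nonneg_left ?_ (hp0 n h i a j)
          refine le_trans (abs_add_le _ _) ?_
          exact add_le_add (hgle n h i a j) (hinfle (n + 1) (by omega) j ω)
        refine le_trans (Finset.sum_le_sum hterm) ?_
        rw [← Finset.sum_mul, hp1 n h i a, one_mul]
      have h1 : |g n i a (η m ⟨n, h⟩ i a ω)| ≤ G := hgle n h i a _
      have h2 : |⨅ b : A, Qiter N g gN step η Q0 m (n + 1) (η m ⟨n, h⟩ i a ω) b ω|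
          ≤ QN ω := hinfle (n + 1) (by omega) _ ω
      calc |g n i a (η m ⟨n, h⟩ i a ω) +
          (⨅ b : A, Qiter N g gN step η Q0 m (n + 1) (η m ⟨n, h⟩ i a ω) b ω) -
          ∑ j, p n i a j * (g n i a j +
            ⨅ b : A, Qiter N g gN step η Q0 m (n + 1) j b ω)|
          ≤ |g n i a (η m ⟨n, h⟩ i a ω) +
            (⨅ b : A, Qiter N g gN step η Q0 m (n + 1) (η m ⟨n, h⟩ i a ω) b ω)| +
            |∑ j, p n i a j * (g n i a j +
              ⨅ b : A, Qiter N g gN step η Q0 m (n + 1) j b ω)| := abs_sub _ _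
        _ ≤ (|g n i a (η m ⟨n, h⟩ i a ω)| +
            |⨅ b : A, Qiter N g gN step η Q0 m (n + 1) (η m ⟨n, h⟩ i a ω) b ω|) +
            (G + QN ω) := add_le_add (abs_add_le _ _) hsum
        _ ≤ (G + QN ω) + (G + QN ω) := by gcongr
        _ = 2 * G + 2 * QN ω := by ring
    · have : Mnoise N p g gN step η Q0 m n i a ω = 0 := by
        simp only [Mnoise, dif_neg h]
      rw [this]
      simp only [abs_zero]
      linarith [hQN0 ω]
  set supM : Ω → ℝ := fun ω => ⨆ x : Fin (N + 1) × S × A,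
    |Mnoise N p g gN step η Q0 m (x.1 : ℕ) x.2.1 x.2.2 ω| with hsupMdef
  have hsupM0 : ∀ ω, 0 ≤ supM ω := by
    intro ω
    simp only [hsupMdef]
    exact le_trans (abs_nonneg _) (le_ciSup (f := fun x : Fin (N + 1) × S × A =>
      |Mnoise N p g gN step η Q0 m (x.1 : ℕ) x.2.1 x.2.2 ω|)
      (Set.Finite.bddAbove (Set.finite_range _))
      (⟨0, Classical.arbitrary S, Classical.arbitrary A⟩ : Fin (N + 1) × S × A))
  have hsupMle : ∀ ω, supM ω ≤ 2 * G + 2 * QN ω := fun ω =>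
    ciSup_le fun x => hMle (x.1 : ℕ) x.2.1 x.2.2 ω
  have hFH : ∀ ω, supM ω ^ 2 ≤ (8 * G ^ 2 + 8) * (1 + QN ω ^ 2) := by
    intro ω
    nlinarith [hsupM0 ω, hsupMle ω, hQN0 ω, hG, sq_nonneg (G - QN ω),
      sq_nonneg (G * QN ω)]
  have hQmeasAll : ∀ (n' : ℕ) (i : S) (a : A),
      Measurable (Qiter N g gN step η Q0 m n' i a) := fun n' i a =>
    (measQ N g gN step η Q0 m n' i a).mono hle le_rfl
  have hMmeas : ∀ (n : ℕ) (i : S) (a : A),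
      Measurable (Mnoise N p g gN step η Q0 m n i a) := by
    intro n i a
    by_cases h : n < N
    · have hrw : Mnoise N p g gN step η Q0 m n i a = fun ω =>
          g n i a (η m ⟨n, h⟩ i a ω) +
            (⨅ b : A, Qiter N g gN step η Q0 m (n + 1) (η m ⟨n, h⟩ i a ω) b ω) -
            ∑ j, p n i a j * (g n i a j +
              ⨅ b : A, Qiter N g gN step η Q0 m (n + 1) j b ω) := by
        funext ω; simp only [Mnoise, dif_pos h]
      rw [hrw]
      have hg : Measurable (fun ω => g n i a (η m ⟨n, h⟩ i a ω)) :=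
        (measurable_of_countable (g n i a)).comp (hmeas m ⟨n, h⟩ i a)
      have hinf : Measurable (fun ω =>
          ⨅ b : A, Qiter N g gN step η Q0 m (n + 1) (η m ⟨n, h⟩ i a ω) b ω) := by
        have heq : (fun ω =>
            ⨅ b : A, Qiter N g gN step η Q0 m (n + 1) (η m ⟨n, h⟩ i a ω) b ω)
            = fun ω => ∑ j : S, if η m ⟨n, h⟩ i a ω = j then
                (⨅ b : A, Qiter N g gN step η Q0 m (n + 1) j b ω) else 0 := by
          funext ω
          rw [Finset.sum_ite_eq]
          simp
        rw [heq]
        refine Finset.measurable_sum _ fun j _ => Measurable.ite ?_ ?_ measurable_const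
        · exact (hmeas m ⟨n, h⟩ i a) (measurableSet_singleton j)
        · exact Measurable.iInf fun b => hQmeasAll (n + 1) j b
      have hsum : Measurable (fun ω : Ω => ∑ j, p n i a j * (g n i a j +
          ⨅ b : A, Qiter N g gN step η Q0 m (n + 1) j b ω)) :=
        Finset.measurable_sum _ fun j _ => measurable_const.mul
          (measurable_const.add (Measurable.iInf fun b => hQmeasAll (n + 1) j b))
      exact (hg.add hinf).sub hsum
    · have : Mnoise N p g gN step η Q0 m n i a = fun _ => 0 := by
        funext ω; simp only [Mnoise, dif_neg h]
      rw [this]; exact measurable_const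
  have hMabs : ∀ x : Fin (N + 1) × S × A, Measurable fun ω =>
      |Mnoise N p g gN step η Q0 m (x.1 : ℕ) x.2.1 x.2.2 ω| := fun x =>
    (hMmeas (x.1 : ℕ) x.2.1 x.2.2).abs
  have hsupMmeas : Measurable supM := by
    rw [hsupMdef]
    exact Measurable.iSup hMabs
  have hFmeas : Measurable (fun ω => supM ω ^ 2) := hsupMmeas.pow_const 2
  have hQNmeasm : Measurable[filt N η m] QN := by
    have h' : Measurable[filt N η m] (fun ω => ⨆ x : Fin (N + 1) × S × A,
        |Qiter N g gN step η Q0 m (x.1 : ℕ) x.2.1 x.2.2 ω|) :=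
      Measurable.iSup fun x : Fin (N + 1) × S × A =>
        measurable_abs.comp (measQ N g gN step η Q0 m (x.1 : ℕ) x.2.1 x.2.2)
    exact hQNdef ▸ h'
  have hHmeasm : Measurable[filt N η m]
      (fun ω => (8 * G ^ 2 + 8) * (1 + QN ω ^ 2)) :=
    measurable_const.mul (measurable_const.add (hQNmeasm.pow_const 2))
  have hFint : Integrable (fun ω => supM ω ^ 2) P := by
    refine Integrable.mono' (integrable_const ((2 * G + 2 * B) ^ 2))
      hFmeas.aestronglyMeasurable (ae_of_all _ fun ω => ?_)
    rw [Real.norm_eq_abs, abs_of_nonneg (sq_nonneg _)]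
    have h1 := hsupM0 ω
    have h2 := (hsupMle ω).trans (by linarith [hQNB ω] : 2 * G + 2 * QN ω ≤ 2 * G + 2 * B)
    nlinarith
  have hHint : Integrable (fun ω => (8 * G ^ 2 + 8) * (1 + QN ω ^ 2)) P := by
    refine Integrable.mono' (integrable_const ((8 * G ^ 2 + 8) * (1 + B ^ 2)))
      ((hHmeasm.mono hle le_rfl)).aestronglyMeasurable (ae_of_all _ fun ω => ?_)
    rw [Real.norm_eq_abs, abs_of_nonneg (by nlinarith [hQN0 ω, hG] : (0:ℝ) ≤
      (8 * G ^ 2 + 8) * (1 + QN ω ^ 2))]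
    have h1 := hQN0 ω
    have h2 := hQNB ω
    have h3 : QN ω ^ 2 ≤ B ^ 2 := by nlinarith
    nlinarith [h3, sq_nonneg G]
  have hmono := condExp_mono (m := filt N η m) hFint hHint (ae_of_all _ hFH)
  have hHcond : MeasureTheory.condExp (filt N η m) P (fun ω => (8 * G ^ 2 + 8) * (1 + QN ω ^ 2)) =
      fun ω => (8 * G ^ 2 + 8) * (1 + QN ω ^ 2) :=
    condExp_of_stronglyMeasurable hle hHmeasm.stronglyMeasurable hHint
  filter_upwards [hmono] with ω hω
  calc MeasureTheory.condExp (filt N η m) P (fun ω' => supM ω' ^ 2) ω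
      ≤ MeasureTheory.condExp (filt N η m) P (fun ω => (8 * G ^ 2 + 8) * (1 + QN ω ^ 2)) ω := hω
    _ = (8 * G ^ 2 + 8) * (1 + QN ω ^ 2) := by rw [hHcond]

end
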